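/- arXiv:0811.3650 — 2 statements merged into one kernel-verified Lean document; each statement's English description precedes it below -/
import Mathlib

section
/- Let f : ℤ → ℝ and let a < b be integers. If ∑_{t=a+1}^{b} f(t) · (η(t) − η(t−1)) = 0 for every function η : ℤ → ℝ with η(a) = η(b) = 0, then f(t) = f(a+1) for all t with a+1 ≤ t ≤ b. -/
/-- Discrete fundamental lemma of the calculus of variations (𝕋 = ℤ). -/
theorem stmt_1 (a b : ℤ) (hab : a < b) (f : ℤ → ℝ)
    (h : ∀ η : ℤ → ℝ, η a = 0 → η b = 0 →
      ∑ t ∈ Finset.Icc (a + 1) b, f t * (η t - η (t - 1)) = 0) :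
    ∀ t : ℤ, a + 1 ≤ t → t ≤ b → f t = f (a + 1) := by
  have key : ∀ s : ℤ, a + 1 ≤ s → s ≤ b → f s = f b := by
    intro s hs1 hs2
    rcases eq_or_lt_of_le hs2 with rfl | hsb
    · rfl
    · set η : ℤ → ℝ := fun x => if s ≤ x ∧ x ≤ b - 1 then 1 else 0 with hη
      have hηa : η a = 0 := by
        simp only [hη]; rw [if_neg]; rintro ⟨h1, _⟩; omega
      have hηb : η b = 0 := by
        simp only [hη]; rw [if_neg]; rintro ⟨_, h2⟩; omega
      have hsum := h η hηa hηb
      have hpt : ∀ t ∈ Finset.Icc (a + 1) b,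
          f t * (η t - η (t - 1)) =
          (if t = s then f s else 0) + (if t = b then -(f b) else 0) := by
        intro t ht
        simp only [Finset.mem_Icc] at ht
        simp only [hη]
        split_ifs with h1 h2 h3 h4 h5 h6 h7 h8 h9 h10 h11 h12 <;>
          first
          | (exfalso; omega)
          | simp_all
      rw [Finset.sum_congr rfl hpt, Finset.sum_add_distrib,
        Finset.sum_ite_eq' (Finset.Icc (a+1) b) s (fun _ => f s),
        Finset.sum_ite_eq' (Finset.Icc (a+1) b) b (fun _ => -(f b)),
        if_pos (Finset.mem_Icc.mpr ⟨hs1, hs2⟩),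
        if_pos (Finset.mem_Icc.mpr ⟨by omega, le_rfl⟩)] at hsum
      linarith
  intro t ht1 ht2
  rw [key t ht1 ht2, key (a + 1) le_rfl (by omega)]
end

section
/- Let a < b be integers and f, g : ℤ × ℝ × ℝ → ℝ with (x,v) ↦ f(t,x,v) and (x,v) ↦ g(t,x,v) continuously differentiable for each t. Suppose y : {a,…,b} → ℝ is a local minimizer of I[y] = ∑_{t=a+1}^{b} f(t, y(t−1), y(t)−y(t−1)) subject to y(a) = α, y(b) = β and ∑_{t=a+1}^{b} g(t, y(t−1), y(t)−y(t−1)) = Λ, and suppose t ↦ g_v(t, y(t−1), y(t)−y(t−1)) − ∑_{τ=a+1}^{t} g_x(τ, y(τ−1), y(τ)−y(τ−1)) is not constant on {a+1,…,b}. Then there exists λ ∈ ℝ such that, with F = f − λg, the discrete Euler–Lagrange equation F_v(t, y(t−1), y(t)−y(t−1)) − F_v(t−1, y(t−2), y(t−1)−y(t−2)) = F_x(t, y(t−1), y(t)−y(t−1)) holds for all t ∈ {a+2,…,b}. -/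
open Finset

theorem jointFDeriv (G Gx Gv : ℝ → ℝ → ℝ)
    (hx : ∀ x v, HasDerivAt (fun x' => G x' v) (Gx x v) x)
    (hv : ∀ x v, HasDerivAt (fun v' => G x v') (Gv x v) v)
    (hxc : Continuous fun p : ℝ × ℝ => Gx p.1 p.2) (p : ℝ × ℝ) :
    HasFDerivAt (fun q : ℝ × ℝ => G q.1 q.2)
      ((Gx p.1 p.2) • ContinuousLinearMap.fst ℝ ℝ ℝ +
        (Gv p.1 p.2) • ContinuousLinearMap.snd ℝ ℝ ℝ) p := by
  obtain ⟨x₀, v₀⟩ := p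
  have hB : HasFDerivAt (fun q : ℝ × ℝ => G x₀ q.2)
      ((Gv x₀ v₀) • ContinuousLinearMap.snd ℝ ℝ ℝ) (x₀, v₀) :=
    (hv x₀ v₀).comp_hasFDerivAt _ (hasFDerivAt_snd)
  rw [hasFDerivAt_iff_isLittleO] at hB ⊢
  have hA : (fun q : ℝ × ℝ => G q.1 q.2 - G x₀ q.2 - Gx x₀ v₀ * (q.1 - x₀))
      =o[nhds (x₀, v₀)] fun q : ℝ × ℝ => q - (x₀, v₀) := by
    rw [Asymptotics.isLittleO_iff]
    intro c hc
    obtain ⟨r, hr, hball⟩ := Metric.continuousAt_iff.mp (hxc.continuousAt (x := (x₀, v₀))) c hc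
    rw [Metric.eventually_nhds_iff]
    refine ⟨r, hr, fun q hq => ?_⟩
    have h1 : |q.1 - x₀| ≤ ‖q - (x₀, v₀)‖ := by
      have : (q - (x₀, v₀)).1 = q.1 - x₀ := rfl
      rw [Prod.norm_def]
      exact le_max_of_le_left (by rw [← this]; rfl)
    have h2 : |q.2 - v₀| ≤ ‖q - (x₀, v₀)‖ := by
      rw [Prod.norm_def]; exact le_max_of_le_right le_rfl
    have hqn : ‖q - (x₀, v₀)‖ < r := by rwa [← dist_eq_norm]
    have key : ‖(G q.1 q.2 - Gx x₀ v₀ * q.1) - (G x₀ q.2 - Gx x₀ v₀ * x₀)‖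
        ≤ c * ‖q.1 - x₀‖ := by
      refine Convex.norm_image_sub_le_of_norm_hasDerivWithin_le
        (f := fun x => G x q.2 - Gx x₀ v₀ * x)
        (f' := fun x => Gx x q.2 - Gx x₀ v₀) (s := Metric.ball x₀ r)
        (fun x hxm => ?_) (fun x hxm => ?_) (convex_ball _ _) ?_ ?_
      · exact (((hx x q.2).sub (by simpa using (hasDerivAt_id x).const_mul (Gx x₀ v₀)))).hasDerivWithinAt
      · have : dist (x, q.2) (x₀, v₀) < r := by
          rw [Prod.dist_eq]
          exact max_lt (Metric.mem_ball.mp hxm) (lt_of_le_of_lt (by rwa [Real.dist_eq]) hqn)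
        have := hball (x := (x, q.2)) this
        rw [Real.dist_eq] at this
        exact le_of_lt this
      · exact Metric.mem_ball_self hr
      · exact Metric.mem_ball.mpr (lt_of_le_of_lt (by rwa [Real.dist_eq]) hqn)
    calc ‖G q.1 q.2 - G x₀ q.2 - Gx x₀ v₀ * (q.1 - x₀)‖
        = ‖(G q.1 q.2 - Gx x₀ v₀ * q.1) - (G x₀ q.2 - Gx x₀ v₀ * x₀)‖ := by ring_nf
      _ ≤ c * ‖q.1 - x₀‖ := key
      _ ≤ c * ‖q - (x₀, v₀)‖ := by
          exact mul_le_mul_of_nonneg_left (by simpa [Real.norm_eq_abs] using h1) (le_of_lt hc)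
  have := hA.add hB
  refine this.congr' ?_ (Filter.Eventually.of_forall fun q => rfl)
  refine Filter.Eventually.of_forall fun q => ?_
  simp only [ContinuousLinearMap.add_apply, ContinuousLinearMap.coe_smul',
    Pi.smul_apply, ContinuousLinearMap.coe_fst', ContinuousLinearMap.coe_snd', smul_eq_mul]
  have h1 : (q - (x₀, v₀)).1 = q.1 - x₀ := rfl
  have h2 : (q - (x₀, v₀)).2 = q.2 - v₀ := rfl
  rw [h1, h2]; ring

theorem jointStrict (G Gx Gv : ℝ → ℝ → ℝ)
    (hx : ∀ x v, HasDerivAt (fun x' => G x' v) (Gx x v) x)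
    (hv : ∀ x v, HasDerivAt (fun v' => G x v') (Gv x v) v)
    (hxc : Continuous fun p : ℝ × ℝ => Gx p.1 p.2)
    (hvc : Continuous fun p : ℝ × ℝ => Gv p.1 p.2) (p : ℝ × ℝ) :
    HasStrictFDerivAt (fun q : ℝ × ℝ => G q.1 q.2)
      ((Gx p.1 p.2) • ContinuousLinearMap.fst ℝ ℝ ℝ +
        (Gv p.1 p.2) • ContinuousLinearMap.snd ℝ ℝ ℝ) p :=
  hasStrictFDerivAt_of_hasFDerivAt_of_continuousAt
    (f' := fun q : ℝ × ℝ => (Gx q.1 q.2) • ContinuousLinearMap.fst ℝ ℝ ℝ +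
        (Gv q.1 q.2) • ContinuousLinearMap.snd ℝ ℝ ℝ)
    (Filter.Eventually.of_forall fun q => jointFDeriv G Gx Gv hx hv hxc q)
    (((hxc.smul continuous_const).add (hvc.smul continuous_const)).continuousAt)

theorem sumStrict (a b : ℤ) (G Gx Gv : ℤ → ℝ → ℝ → ℝ)
    (hx : ∀ t x v, HasDerivAt (fun x' => G t x' v) (Gx t x v) x)
    (hv : ∀ t x v, HasDerivAt (fun v' => G t x v') (Gv t x v) v)
    (hxc : ∀ t, Continuous fun p : ℝ × ℝ => Gx t p.1 p.2)
    (hvc : ∀ t, Continuous fun p : ℝ × ℝ => Gv t p.1 p.2)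
    (y η η₀ : ℤ → ℝ) :
    ∃ L : ℝ × ℝ →L[ℝ] ℝ,
      HasStrictFDerivAt (fun ε : ℝ × ℝ => ∑ t ∈ Finset.Icc (a+1) b,
        G t (y (t-1) + ε.1 * η (t-1) + ε.2 * η₀ (t-1))
          ((y t + ε.1 * η t + ε.2 * η₀ t) - (y (t-1) + ε.1 * η (t-1) + ε.2 * η₀ (t-1)))) L 0
      ∧ L (1,0) = ∑ t ∈ Finset.Icc (a+1) b,
          (Gx t (y (t-1)) (y t - y (t-1)) * η (t-1)
            + Gv t (y (t-1)) (y t - y (t-1)) * (η t - η (t-1)))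
      ∧ L (0,1) = ∑ t ∈ Finset.Icc (a+1) b,
          (Gx t (y (t-1)) (y t - y (t-1)) * η₀ (t-1)
            + Gv t (y (t-1)) (y t - y (t-1)) * (η₀ t - η₀ (t-1))) := by
  classical
  set Lt : ℤ → (ℝ × ℝ →L[ℝ] ℝ × ℝ) := fun t =>
    ((η (t-1)) • ContinuousLinearMap.fst ℝ ℝ ℝ + (η₀ (t-1)) • ContinuousLinearMap.snd ℝ ℝ ℝ).prod
      ((η t - η (t-1)) • ContinuousLinearMap.fst ℝ ℝ ℝ +
        (η₀ t - η₀ (t-1)) • ContinuousLinearMap.snd ℝ ℝ ℝ) with hLt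
  set M : ℤ → (ℝ × ℝ →L[ℝ] ℝ) := fun t =>
    ((Gx t (y (t-1)) (y t - y (t-1))) • ContinuousLinearMap.fst ℝ ℝ ℝ +
      (Gv t (y (t-1)) (y t - y (t-1))) • ContinuousLinearMap.snd ℝ ℝ ℝ).comp (Lt t) with hM
  refine ⟨∑ t ∈ Finset.Icc (a+1) b, M t, ?_, ?_, ?_⟩
  · apply HasStrictFDerivAt.fun_sum
    intro t _
    have hinner : HasStrictFDerivAt (fun ε : ℝ × ℝ =>
        ((y (t-1) + ε.1 * η (t-1) + ε.2 * η₀ (t-1),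
          (y t + ε.1 * η t + ε.2 * η₀ t) - (y (t-1) + ε.1 * η (t-1) + ε.2 * η₀ (t-1))) : ℝ × ℝ))
        (Lt t) 0 := by
      have heq : (fun ε : ℝ × ℝ =>
          ((y (t-1) + ε.1 * η (t-1) + ε.2 * η₀ (t-1),
            (y t + ε.1 * η t + ε.2 * η₀ t) - (y (t-1) + ε.1 * η (t-1) + ε.2 * η₀ (t-1))) : ℝ × ℝ))
          = fun ε : ℝ × ℝ => ((y (t-1), y t - y (t-1)) : ℝ × ℝ) + Lt t ε := by
        funext ε
        simp only [hLt, ContinuousLinearMap.prod_apply, ContinuousLinearMap.add_apply,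
          ContinuousLinearMap.coe_smul', Pi.smul_apply, ContinuousLinearMap.coe_fst',
          ContinuousLinearMap.coe_snd', smul_eq_mul, Prod.mk_add_mk]
        exact Prod.ext (by ring) (by ring)
      rw [heq]
      exact (Lt t).hasStrictFDerivAt.const_add _
    have hpt : ((y (t-1) + (0:ℝ×ℝ).1 * η (t-1) + (0:ℝ×ℝ).2 * η₀ (t-1),
        (y t + (0:ℝ×ℝ).1 * η t + (0:ℝ×ℝ).2 * η₀ t) -
          (y (t-1) + (0:ℝ×ℝ).1 * η (t-1) + (0:ℝ×ℝ).2 * η₀ (t-1))) : ℝ × ℝ)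
        = (y (t-1), y t - y (t-1)) := by norm_num
    have houter : HasStrictFDerivAt (fun q : ℝ × ℝ => G t q.1 q.2)
        ((Gx t (y (t-1)) (y t - y (t-1))) • ContinuousLinearMap.fst ℝ ℝ ℝ +
          (Gv t (y (t-1)) (y t - y (t-1))) • ContinuousLinearMap.snd ℝ ℝ ℝ)
        ((y (t-1) + (0:ℝ×ℝ).1 * η (t-1) + (0:ℝ×ℝ).2 * η₀ (t-1),
          (y t + (0:ℝ×ℝ).1 * η t + (0:ℝ×ℝ).2 * η₀ t) -
            (y (t-1) + (0:ℝ×ℝ).1 * η (t-1) + (0:ℝ×ℝ).2 * η₀ (t-1)))) := by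
      rw [hpt]
      exact jointStrict (G t) (Gx t) (Gv t) (hx t) (hv t) (hxc t) (hvc t)
        (y (t-1), y t - y (t-1))
    exact houter.comp (0 : ℝ × ℝ) hinner
  · simp only [hM, hLt, ContinuousLinearMap.sum_apply, ContinuousLinearMap.comp_apply,
      ContinuousLinearMap.prod_apply, ContinuousLinearMap.add_apply,
      ContinuousLinearMap.coe_smul', Pi.smul_apply, ContinuousLinearMap.coe_fst',
      ContinuousLinearMap.coe_snd', smul_eq_mul, mul_one, mul_zero, add_zero]
  · simp only [hM, hLt, ContinuousLinearMap.sum_apply, ContinuousLinearMap.comp_apply,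
      ContinuousLinearMap.prod_apply, ContinuousLinearMap.add_apply,
      ContinuousLinearMap.coe_smul', Pi.smul_apply, ContinuousLinearMap.coe_fst',
      ContinuousLinearMap.coe_snd', smul_eq_mul, mul_one, mul_zero, add_zero, zero_add]

theorem sum_eval (a b s : ℤ) (hsa : a < s) (hsb : s < b) (P Q : ℤ → ℝ) :
    ∑ t ∈ Finset.Icc (a+1) b, (P t * (if t - 1 = s then (1:ℝ) else 0)
      + Q t * ((if t = s then (1:ℝ) else 0) - (if t - 1 = s then (1:ℝ) else 0)))
      = Q s + P (s+1) - Q (s+1) := by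
  classical
  have key : ∀ t ∈ Finset.Icc (a+1) b,
      P t * (if t - 1 = s then (1:ℝ) else 0)
        + Q t * ((if t = s then (1:ℝ) else 0) - (if t - 1 = s then (1:ℝ) else 0))
      = (if t = s then Q t else 0) + (if t = s + 1 then P t - Q t else 0) := by
    intro t _
    split_ifs <;> first | ring1 | (exfalso; omega)
  rw [Finset.sum_congr rfl key, Finset.sum_add_distrib, Finset.sum_ite_eq', Finset.sum_ite_eq',
    if_pos (by rw [Finset.mem_Icc]; omega), if_pos (by rw [Finset.mem_Icc]; omega)]
  ring

/-- Theorem 1 of the paper specialized to the time scale 𝕋 = ℤ. -/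
theorem stmt_6 (a b : ℤ) (hab : a < b) (α β Λ : ℝ)
    (f g fx fv gx gv : ℤ → ℝ → ℝ → ℝ)
    (hfx : ∀ t x v, HasDerivAt (fun x' => f t x' v) (fx t x v) x)
    (hfv : ∀ t x v, HasDerivAt (fun v' => f t x v') (fv t x v) v)
    (hgx : ∀ t x v, HasDerivAt (fun x' => g t x' v) (gx t x v) x)
    (hgv : ∀ t x v, HasDerivAt (fun v' => g t x v') (gv t x v) v)
    (hfxc : ∀ t, Continuous fun p : ℝ × ℝ => fx t p.1 p.2)
    (hfvc : ∀ t, Continuous fun p : ℝ × ℝ => fv t p.1 p.2)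
    (hgxc : ∀ t, Continuous fun p : ℝ × ℝ => gx t p.1 p.2)
    (hgvc : ∀ t, Continuous fun p : ℝ × ℝ => gv t p.1 p.2)
    (y : ℤ → ℝ) (hya : y a = α) (hyb : y b = β)
    (hJ : ∑ t ∈ Finset.Icc (a + 1) b, g t (y (t - 1)) (y t - y (t - 1)) = Λ)
    -- y is a local minimizer:
    (hmin : ∃ δ > 0, ∀ z : ℤ → ℝ, z a = α → z b = β →
      (∑ t ∈ Finset.Icc (a + 1) b, g t (z (t - 1)) (z t - z (t - 1))) = Λ →
      (∀ t ∈ Finset.Icc a b, |z t - y t| < δ) →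
      (∑ t ∈ Finset.Icc (a + 1) b, f t (y (t - 1)) (y t - y (t - 1))) ≤
        ∑ t ∈ Finset.Icc (a + 1) b, f t (z (t - 1)) (z t - z (t - 1)))
    -- y is not an extremal of the constraint functional:
    (hnormal : ¬ ∃ c : ℝ, ∀ t ∈ Finset.Icc (a + 1) b,
      gv t (y (t - 1)) (y t - y (t - 1)) -
        (∑ τ ∈ Finset.Icc (a + 1) t, gx τ (y (τ - 1)) (y τ - y (τ - 1))) = c) :
    ∃ lam : ℝ, ∀ t ∈ Finset.Icc (a + 2) b,
      (fv t (y (t - 1)) (y t - y (t - 1)) - lam * gv t (y (t - 1)) (y t - y (t - 1))) -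
        (fv (t - 1) (y (t - 2)) (y (t - 1) - y (t - 2)) -
          lam * gv (t - 1) (y (t - 2)) (y (t - 1) - y (t - 2))) =
      fx t (y (t - 1)) (y t - y (t - 1)) - lam * gx t (y (t - 1)) (y t - y (t - 1)) := by
  classical
  set DI : ℤ → ℝ := fun s => fv s (y (s-1)) (y s - y (s-1)) + fx (s+1) (y s) (y (s+1) - y s)
      - fv (s+1) (y s) (y (s+1) - y s) with hDI
  set DJ : ℤ → ℝ := fun s => gv s (y (s-1)) (y s - y (s-1)) + gx (s+1) (y s) (y (s+1) - y s)
      - gv (s+1) (y s) (y (s+1) - y s) with hDJ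
  -- Step 1: existence of a point where the constraint's variation is nonzero
  have hs0 : ∃ s₀, a < s₀ ∧ s₀ < b ∧ DJ s₀ ≠ 0 := by
    by_contra hcon
    push_neg at hcon
    apply hnormal
    refine ⟨gv (a+1) (y a) (y (a+1) - y a) - gx (a+1) (y a) (y (a+1) - y a), ?_⟩
    have key : ∀ t, a + 1 ≤ t → t ≤ b → gv t (y (t-1)) (y t - y (t-1)) -
        (∑ τ ∈ Finset.Icc (a+1) t, gx τ (y (τ-1)) (y τ - y (τ-1))) =
        gv (a+1) (y a) (y (a+1) - y a) - gx (a+1) (y a) (y (a+1) - y a) := by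
      intro t h1
      refine Int.le_induction (motive := fun t _ => t ≤ b → gv t (y (t-1)) (y t - y (t-1)) -
        (∑ τ ∈ Finset.Icc (a+1) t, gx τ (y (τ-1)) (y τ - y (τ-1))) =
        gv (a+1) (y a) (y (a+1) - y a) - gx (a+1) (y a) (y (a+1) - y a)) ?_ ?_ t h1
      · intro _
        rw [Finset.Icc_self, Finset.sum_singleton]
        have e1 : a + 1 - 1 = a := by ring
        rw [e1]
      · intro t ht ih hb
        have hDJt : DJ t = 0 := hcon t (by omega) (by omega)
        simp only [hDJ] at hDJt
        have hins : Finset.Icc (a+1) (t+1) = insert (t+1) (Finset.Icc (a+1) t) := by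
          ext u; simp only [Finset.mem_Icc, Finset.mem_insert]; omega
        rw [hins, Finset.sum_insert (by simp only [Finset.mem_Icc]; omega)]
        have e1 : t + 1 - 1 = t := by ring
        rw [e1]
        have := ih (by omega)
        linarith
    intro t ht
    rw [Finset.mem_Icc] at ht
    exact key t ht.1 ht.2
  obtain ⟨s₀, hs₀a, hs₀b, hDJ0⟩ := hs0
  refine ⟨DI s₀ / DJ s₀, ?_⟩
  intro t ht
  rw [Finset.mem_Icc] at ht
  have hsa : a < t - 1 := by omega
  have hsb : t - 1 < b := by omega
  have hkey : ∀ s, a < s → s < b → DI s * DJ s₀ = DI s₀ * DJ s := by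
    intro s hsa' hsb'
    rcases eq_or_ne s s₀ with rfl | hne
    · ring
    obtain ⟨δ, hδ, H⟩ := hmin
    set η : ℤ → ℝ := fun u => if u = s then (1:ℝ) else 0 with hη
    set η₀ : ℤ → ℝ := fun u => if u = s₀ then (1:ℝ) else 0 with hη₀
    obtain ⟨LΦ, hLΦ, hLΦ1, hLΦ2⟩ := sumStrict a b g gx gv hgx hgv hgxc hgvc y η η₀
    obtain ⟨LΨ, hLΨ, hLΨ1, hLΨ2⟩ := sumStrict a b f fx fv hfx hfv hfxc hfvc y η η₀
    have hzero : ∀ G : ℤ → ℝ → ℝ → ℝ,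
        (∑ t ∈ Finset.Icc (a+1) b,
          G t (y (t-1) + (0:ℝ×ℝ).1 * η (t-1) + (0:ℝ×ℝ).2 * η₀ (t-1))
            ((y t + (0:ℝ×ℝ).1 * η t + (0:ℝ×ℝ).2 * η₀ t) -
              (y (t-1) + (0:ℝ×ℝ).1 * η (t-1) + (0:ℝ×ℝ).2 * η₀ (t-1))))
        = ∑ t ∈ Finset.Icc (a+1) b, G t (y (t-1)) (y t - y (t-1)) := by
      intro G
      refine Finset.sum_congr rfl fun t _ => ?_
      norm_num
    have hext : IsLocalExtrOn (fun ε : ℝ × ℝ => ∑ t ∈ Finset.Icc (a+1) b,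
        f t (y (t-1) + ε.1 * η (t-1) + ε.2 * η₀ (t-1))
          ((y t + ε.1 * η t + ε.2 * η₀ t) - (y (t-1) + ε.1 * η (t-1) + ε.2 * η₀ (t-1))))
        {ε : ℝ × ℝ | (fun ε : ℝ × ℝ => ∑ t ∈ Finset.Icc (a+1) b,
          g t (y (t-1) + ε.1 * η (t-1) + ε.2 * η₀ (t-1))
            ((y t + ε.1 * η t + ε.2 * η₀ t) -
              (y (t-1) + ε.1 * η (t-1) + ε.2 * η₀ (t-1)))) ε
          = (fun ε : ℝ × ℝ => ∑ t ∈ Finset.Icc (a+1) b,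
          g t (y (t-1) + ε.1 * η (t-1) + ε.2 * η₀ (t-1))
            ((y t + ε.1 * η t + ε.2 * η₀ t) -
              (y (t-1) + ε.1 * η (t-1) + ε.2 * η₀ (t-1)))) 0} 0 := by
      refine Or.inl ?_
      have hev : ∀ᶠ ε : ℝ × ℝ in nhds 0, ε ∈ {ε : ℝ × ℝ | (fun ε : ℝ × ℝ =>
          ∑ t ∈ Finset.Icc (a+1) b,
          g t (y (t-1) + ε.1 * η (t-1) + ε.2 * η₀ (t-1))
            ((y t + ε.1 * η t + ε.2 * η₀ t) -
              (y (t-1) + ε.1 * η (t-1) + ε.2 * η₀ (t-1)))) ε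
          = (fun ε : ℝ × ℝ => ∑ t ∈ Finset.Icc (a+1) b,
          g t (y (t-1) + ε.1 * η (t-1) + ε.2 * η₀ (t-1))
            ((y t + ε.1 * η t + ε.2 * η₀ t) -
              (y (t-1) + ε.1 * η (t-1) + ε.2 * η₀ (t-1)))) 0} →
          (∑ t ∈ Finset.Icc (a+1) b,
            f t (y (t-1) + (0:ℝ×ℝ).1 * η (t-1) + (0:ℝ×ℝ).2 * η₀ (t-1))
              ((y t + (0:ℝ×ℝ).1 * η t + (0:ℝ×ℝ).2 * η₀ t) -
                (y (t-1) + (0:ℝ×ℝ).1 * η (t-1) + (0:ℝ×ℝ).2 * η₀ (t-1)))) ≤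
          ∑ t ∈ Finset.Icc (a+1) b,
            f t (y (t-1) + ε.1 * η (t-1) + ε.2 * η₀ (t-1))
              ((y t + ε.1 * η t + ε.2 * η₀ t) -
                (y (t-1) + ε.1 * η (t-1) + ε.2 * η₀ (t-1))) := by
        rw [Metric.eventually_nhds_iff]
        refine ⟨δ, hδ, fun {ε} hd hmem => ?_⟩
        have h1 : |ε.1| < δ := by
          rw [Prod.dist_eq] at hd
          have := lt_of_le_of_lt (le_max_left _ _) hd
          simp only [Prod.fst_zero, Prod.snd_zero, dist_zero_right, Real.norm_eq_abs] at this
          exact this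
        have h2 : |ε.2| < δ := by
          rw [Prod.dist_eq] at hd
          have := lt_of_le_of_lt (le_max_right _ _) hd
          simp only [Prod.fst_zero, Prod.snd_zero, dist_zero_right, Real.norm_eq_abs] at this
          exact this
        have hba : (fun u => y u + ε.1 * η u + ε.2 * η₀ u) a = α := by
          simp only [hη, hη₀, if_neg (by omega : ¬ a = s), if_neg (by omega : ¬ a = s₀)]
          simpa using hya
        have hbb : (fun u => y u + ε.1 * η u + ε.2 * η₀ u) b = β := by
          simp only [hη, hη₀, if_neg (by omega : ¬ b = s), if_neg (by omega : ¬ b = s₀)]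
          simpa using hyb
        have hcons : (∑ t ∈ Finset.Icc (a+1) b,
            g t ((fun u => y u + ε.1 * η u + ε.2 * η₀ u) (t-1))
              ((fun u => y u + ε.1 * η u + ε.2 * η₀ u) t -
                (fun u => y u + ε.1 * η u + ε.2 * η₀ u) (t-1))) = Λ := by
          have hmem' : (∑ t ∈ Finset.Icc (a+1) b,
              g t (y (t-1) + ε.1 * η (t-1) + ε.2 * η₀ (t-1))
                ((y t + ε.1 * η t + ε.2 * η₀ t) -
                  (y (t-1) + ε.1 * η (t-1) + ε.2 * η₀ (t-1))))
              = ∑ t ∈ Finset.Icc (a+1) b,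
              g t (y (t-1) + (0:ℝ×ℝ).1 * η (t-1) + (0:ℝ×ℝ).2 * η₀ (t-1))
                ((y t + (0:ℝ×ℝ).1 * η t + (0:ℝ×ℝ).2 * η₀ t) -
                  (y (t-1) + (0:ℝ×ℝ).1 * η (t-1) + (0:ℝ×ℝ).2 * η₀ (t-1))) := hmem
          exact hmem'.trans ((hzero g).trans hJ)
        have hclose : ∀ u ∈ Finset.Icc a b,
            |(fun u => y u + ε.1 * η u + ε.2 * η₀ u) u - y u| < δ := by
          intro u _
          have e0 : (y u + ε.1 * η u + ε.2 * η₀ u) - y u = ε.1 * η u + ε.2 * η₀ u := by ring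
          show |(y u + ε.1 * η u + ε.2 * η₀ u) - y u| < δ
          rw [e0]
          rcases eq_or_ne u s with rfl | h3
          · simp only [hη, hη₀, if_pos rfl, if_neg hne]
            simpa using h1
          · rcases eq_or_ne u s₀ with rfl | h4
            · simp only [hη, hη₀, if_neg h3, if_pos rfl]
              simpa using h2
            · simp only [hη, hη₀, if_neg h3, if_neg h4]
              simpa using hδ
        have := H (fun u => y u + ε.1 * η u + ε.2 * η₀ u) hba hbb hcons hclose
        calc (∑ t ∈ Finset.Icc (a+1) b,
            f t (y (t-1) + (0:ℝ×ℝ).1 * η (t-1) + (0:ℝ×ℝ).2 * η₀ (t-1))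
              ((y t + (0:ℝ×ℝ).1 * η t + (0:ℝ×ℝ).2 * η₀ t) -
                (y (t-1) + (0:ℝ×ℝ).1 * η (t-1) + (0:ℝ×ℝ).2 * η₀ (t-1))))
            = ∑ t ∈ Finset.Icc (a+1) b, f t (y (t-1)) (y t - y (t-1)) := hzero f
          _ ≤ _ := this
      exact eventually_nhdsWithin_iff.mpr hev
    obtain ⟨A, B, hAB, heq⟩ := hext.exists_multipliers_of_hasStrictFDerivAt_1d hLΦ hLΨ
    have e1 := DFunLike.congr_fun heq ((1:ℝ), (0:ℝ))
    have e2 := DFunLike.congr_fun heq ((0:ℝ), (1:ℝ))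
    simp only [ContinuousLinearMap.add_apply, ContinuousLinearMap.coe_smul', Pi.smul_apply,
      smul_eq_mul, ContinuousLinearMap.zero_apply] at e1 e2
    rw [hLΦ1, hLΨ1] at e1
    rw [hLΦ2, hLΨ2] at e2
    have hgs : (∑ t ∈ Finset.Icc (a+1) b, (gx t (y (t-1)) (y t - y (t-1)) * η (t-1)
        + gv t (y (t-1)) (y t - y (t-1)) * (η t - η (t-1)))) = DJ s := by
      simp only [hη]
      rw [sum_eval a b s hsa' hsb']
      simp only [hDJ, add_sub_cancel_right]
    have hfs : (∑ t ∈ Finset.Icc (a+1) b, (fx t (y (t-1)) (y t - y (t-1)) * η (t-1)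
        + fv t (y (t-1)) (y t - y (t-1)) * (η t - η (t-1)))) = DI s := by
      simp only [hη]
      rw [sum_eval a b s hsa' hsb']
      simp only [hDI, add_sub_cancel_right]
    have hgs0 : (∑ t ∈ Finset.Icc (a+1) b, (gx t (y (t-1)) (y t - y (t-1)) * η₀ (t-1)
        + gv t (y (t-1)) (y t - y (t-1)) * (η₀ t - η₀ (t-1)))) = DJ s₀ := by
      simp only [hη₀]
      rw [sum_eval a b s₀ hs₀a hs₀b]
      simp only [hDJ, add_sub_cancel_right]
    have hfs0 : (∑ t ∈ Finset.Icc (a+1) b, (fx t (y (t-1)) (y t - y (t-1)) * η₀ (t-1)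
        + fv t (y (t-1)) (y t - y (t-1)) * (η₀ t - η₀ (t-1)))) = DI s₀ := by
      simp only [hη₀]
      rw [sum_eval a b s₀ hs₀a hs₀b]
      simp only [hDI, add_sub_cancel_right]
    rw [hgs, hfs] at e1
    rw [hgs0, hfs0] at e2
    have hBne : B ≠ 0 := by
      intro hB0
      rw [hB0] at e2
      have hA : A = 0 := by
        have hz : A * DJ s₀ = 0 := by linarith
        rcases mul_eq_zero.mp hz with h | h
        · exact h
        · exact absurd h hDJ0
      exact hAB (by simp [hA, hB0, Prod.ext_iff])
    have hz2 : B * (DI s * DJ s₀ - DI s₀ * DJ s) = 0 := by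
      linear_combination DJ s₀ * e1 - DJ s * e2
    rcases mul_eq_zero.mp hz2 with h | h
    · exact absurd h hBne
    · linarith
  have h1 := hkey (t-1) hsa hsb
  have h2 : DI (t-1) = DI s₀ / DJ s₀ * DJ (t-1) := by
    field_simp
    linarith [h1]
  simp only [hDI, hDJ] at h2
  have e1 : t - 1 + 1 = t := by ring
  have e2 : t - 1 - 1 = t - 2 := by ring
  rw [e1, e2] at h2
  linarith
end
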